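/- Let H be a real inner product space, φ₁, …, φ_n ∈ H, and r > 0. Then (1/n)·E_σ[ sup over w ∈ H with ‖w‖ ≤ r of Σᵢ₌₁ⁿ σᵢ·⟨w, φᵢ⟩ ] ≥ (r/(n·√2))·√(Σᵢ₌₁ⁿ ‖φᵢ‖²), where E_σ denotes the expectation over σ = (σ₁,…,σ_n) i.i.d. uniform on {−1,+1} (equivalently the average over all 2ⁿ sign vectors). -/

import Mathlib

open scoped RealInnerProductSpace

namespace Stmt15Aux
open Finset

variable {n : ℕ} {H : Type*} [NormedAddCommGroup H] [InnerProductSpace ℝ H]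

/-- sign of a boolean -/
def sg (b : Bool) : ℝ := if b then 1 else -1

@[simp] lemma sg_mul_self (b : Bool) : sg b * sg b = 1 := by cases b <;> norm_num [sg]

@[simp] lemma sg_not (b : Bool) : sg (!b) = - sg b := by cases b <;> norm_num [sg]

lemma sg_mul_sg (a b : Bool) : sg a * sg b = if a = b then 1 else -1 := by
  cases a <;> cases b <;> norm_num [sg]

/-- Walsh function -/
def w (A : Finset (Fin n)) (ε : Fin n → Bool) : ℝ := ∏ i ∈ A, sg (ε i)

/-- dual orthogonality -/
lemma sum_w_mul_w (ε ε' : Fin n → Bool) :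
    ∑ A : Finset (Fin n), w A ε * w A ε' = if ε = ε' then (2:ℝ)^n else 0 := by
  have h1 : ∀ A : Finset (Fin n), w A ε * w A ε'
      = (∏ i ∈ A, (sg (ε i) * sg (ε' i))) * ∏ i ∈ Aᶜ, (1:ℝ) := by
    intro A; simp [w, Finset.prod_mul_distrib]
  simp only [h1]
  rw [← Fintype.prod_add (fun i => sg (ε i) * sg (ε' i)) (fun _ => (1:ℝ))]
  have h2 : ∀ i, sg (ε i) * sg (ε' i) + 1 = if ε i = ε' i then (2:ℝ) else 0 := by
    intro i; rw [sg_mul_sg]; split <;> norm_num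
  simp only [h2]
  by_cases h : ε = ε'
  · subst h; simp
  · obtain ⟨i, hi⟩ : ∃ i, ε i ≠ ε' i := by
      by_contra hc; push_neg at hc; exact h (funext hc)
    rw [if_neg h]
    exact Finset.prod_eq_zero (mem_univ i) (by simp [hi])

/-- Fourier coefficient (unnormalized) -/
def coef (f : (Fin n → Bool) → ℝ) (A : Finset (Fin n)) : ℝ := ∑ ε, f ε * w A ε

lemma parseval (f g : (Fin n → Bool) → ℝ) :
    ∑ A : Finset (Fin n), coef f A * coef g A = 2^n * ∑ ε, f ε * g ε := by
  have key : ∀ ε ε' : Fin n → Bool, ∑ A : Finset (Fin n),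
      f ε * w A ε * (g ε' * w A ε') = f ε * g ε' * (if ε = ε' then (2:ℝ)^n else 0) := by
    intro ε ε'
    rw [← sum_w_mul_w ε ε', Finset.mul_sum]
    exact Finset.sum_congr rfl fun A _ => by ring
  simp only [coef, Finset.sum_mul, Finset.mul_sum]
  rw [Finset.sum_comm]
  apply Finset.sum_congr rfl
  intro y _
  rw [Finset.sum_comm]
  simp only [key, mul_ite, mul_zero]
  rw [Finset.sum_ite_eq' univ y (fun i => f i * g y * 2^n)]
  simp
  ring

/-- flip one coordinate -/
def flip (i : Fin n) (ε : Fin n → Bool) : Fin n → Bool := Function.update ε i (!ε i)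

@[simp] lemma flip_apply_self (i : Fin n) (ε : Fin n → Bool) : flip i ε i = !ε i := by
  simp [flip]

lemma flip_apply_ne (i j : Fin n) (ε : Fin n → Bool) (h : j ≠ i) : flip i ε j = ε j := by
  simp [flip, Function.update_of_ne h]

lemma flip_involutive (i : Fin n) : Function.Involutive (flip i) := by
  intro ε
  funext j
  by_cases h : j = i
  · subst h; simp
  · rw [flip_apply_ne _ _ _ h, flip_apply_ne _ _ _ h]

/-- reindexing a sum by a flip -/
lemma sum_flip (i : Fin n) (F : (Fin n → Bool) → ℝ) :
    ∑ ε, F (flip i ε) = ∑ ε, F ε :=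
  Equiv.sum_comp ((flip_involutive i).toPerm _) F

def flipAll (ε : Fin n → Bool) : Fin n → Bool := fun j => !ε j

lemma flipAll_involutive : Function.Involutive (flipAll (n := n)) := by
  intro ε; funext j; simp [flipAll]

lemma sum_flipAll (F : (Fin n → Bool) → ℝ) :
    ∑ ε, F (flipAll ε) = ∑ ε, F ε :=
  Equiv.sum_comp ((flipAll_involutive).toPerm _) F

lemma w_flip (A : Finset (Fin n)) (i : Fin n) (ε : Fin n → Bool) :
    w A (flip i ε) = (if i ∈ A then -1 else 1) * w A ε := by
  by_cases h : i ∈ A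
  · rw [if_pos h, w, w, ← Finset.mul_prod_erase A _ h, ← Finset.mul_prod_erase A _ h]
    have : ∏ j ∈ A.erase i, sg (flip i ε j) = ∏ j ∈ A.erase i, sg (ε j) :=
      Finset.prod_congr rfl fun j hj => by
        rw [flip_apply_ne _ _ _ (Finset.ne_of_mem_erase hj)]
    rw [this, flip_apply_self, sg_not]; ring
  · rw [if_neg h, one_mul, w, w]
    exact Finset.prod_congr rfl fun j hj => by
      rw [flip_apply_ne _ _ _ (by rintro rfl; exact h hj)]

lemma coef_comp_flip (f : (Fin n → Bool) → ℝ) (i : Fin n) (A : Finset (Fin n)) :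
    coef (fun ε => f (flip i ε)) A = (if i ∈ A then -1 else 1) * coef f A := by
  unfold coef
  rw [Finset.mul_sum, ← sum_flip i (fun ε => f (flip i ε) * w A ε)]
  apply Finset.sum_congr rfl
  intro ε _
  rw [flip_involutive i ε, w_flip]
  ring

/-- the Rademacher sum -/
def S (φ : Fin n → H) (ε : Fin n → Bool) : H := ∑ i, sg (ε i) • φ i

lemma S_flipAll (φ : Fin n → H) (ε : Fin n → Bool) : S φ (flipAll ε) = - S φ ε := by
  rw [S, S, ← Finset.sum_neg_distrib]
  exact Finset.sum_congr rfl fun i _ => by rw [flipAll]; simp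

lemma S_flip (φ : Fin n → H) (i : Fin n) (ε : Fin n → Bool) :
    S φ (flip i ε) = S φ ε - (2 * sg (ε i)) • φ i := by
  have hfun : (fun j => sg (flip i ε j) • φ j)
      = Function.update (fun j => sg (ε j) • φ j) i ((- sg (ε i)) • φ i) := by
    funext j
    by_cases h : j = i
    · subst h; rw [Function.update_self, flip_apply_self, sg_not]
    · rw [Function.update_of_ne h, flip_apply_ne _ _ _ h]
  rw [S, S, hfun, Finset.sum_update_of_mem (mem_univ i),
    ← Finset.add_sum_erase univ (fun j => sg (ε j) • φ j) (mem_univ i)]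
  rw [show univ \ {i} = univ.erase i from by rw [Finset.erase_eq]]
  rw [add_sub_right_comm]
  congr 1
  rw [← sub_smul]
  congr 1
  ring

/-- key triangle inequality: `∑ i ‖S (flip i ε)‖ ≥ (n-2)‖S ε‖` -/
lemma triangle_key (φ : Fin n → H) (ε : Fin n → Bool) :
    ((n : ℝ) - 2) * ‖S φ ε‖ ≤ ∑ i, ‖S φ (flip i ε)‖ := by
  have h2 : ∀ i, (2 * sg (ε i)) • φ i = (2:ℝ) • (sg (ε i) • φ i) := fun i => by
    rw [smul_smul]
  have h1 : ∑ i, S φ (flip i ε) = ((n : ℝ) - 2) • S φ ε := by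
    simp only [S_flip, h2]
    rw [Finset.sum_sub_distrib, ← Finset.smul_sum, ← S, Finset.sum_const, card_univ,
      Fintype.card_fin, sub_smul, ← Nat.cast_smul_eq_nsmul ℝ]
  calc ((n : ℝ) - 2) * ‖S φ ε‖ ≤ |(n : ℝ) - 2| * ‖S φ ε‖ := by
        apply mul_le_mul_of_nonneg_right (le_abs_self _) (norm_nonneg _)
    _ = ‖((n : ℝ) - 2) • S φ ε‖ := by rw [norm_smul, Real.norm_eq_abs]
    _ = ‖∑ i, S φ (flip i ε)‖ := by rw [h1]
    _ ≤ ∑ i, ‖S φ (flip i ε)‖ := norm_sum_le _ _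

/-- orthogonality of the signs -/
lemma sum_sg_mul_sg (i j : Fin n) :
    ∑ ε : Fin n → Bool, sg (ε i) * sg (ε j) = if i = j then (2:ℝ)^n else 0 := by
  by_cases h : i = j
  · subst h
    simp [sg_mul_self, Finset.sum_const, card_univ, Fintype.card_fun]
  · rw [if_neg h]
    have key := sum_flip i (fun ε => sg (ε i) * sg (ε j))
    have hneg : ∑ ε : Fin n → Bool, sg (flip i ε i) * sg (flip i ε j)
        = - ∑ ε : Fin n → Bool, sg (ε i) * sg (ε j) := by
      rw [← Finset.sum_neg_distrib]
      apply Finset.sum_congr rfl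
      intro ε _
      rw [flip_apply_self, sg_not, flip_apply_ne _ _ _ (Ne.symm h)]
      ring
    rw [hneg] at key
    linarith

/-- total energy: `∑_ε ‖S ε‖² = 2^n ∑ ‖φ i‖²` -/
lemma sum_normsq (φ : Fin n → H) :
    ∑ ε : Fin n → Bool, ‖S φ ε‖^2 = 2^n * ∑ i, ‖φ i‖^2 := by
  have expand : ∀ ε, ‖S φ ε‖^2 = ∑ j, ∑ i, sg (ε i) * sg (ε j) * ⟪φ i, φ j⟫ := by
    intro ε
    rw [← real_inner_self_eq_norm_sq, S, inner_sum]
    apply Finset.sum_congr rfl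
    intro j _
    rw [sum_inner]
    apply Finset.sum_congr rfl
    intro i _
    rw [real_inner_smul_left, real_inner_smul_right]
    ring
  simp only [expand]
  rw [Finset.sum_comm]
  rw [Finset.mul_sum]
  apply Finset.sum_congr rfl
  intro j _
  rw [Finset.sum_comm]
  have hcol : ∀ i, ∑ ε : Fin n → Bool, sg (ε i) * sg (ε j) * ⟪φ i, φ j⟫
      = (if i = j then (2:ℝ)^n else 0) * ⟪φ i, φ j⟫ := by
    intro i
    rw [← sum_sg_mul_sg i j, Finset.sum_mul]
  simp only [hcol, ite_mul, zero_mul]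
  rw [Finset.sum_ite_eq' univ j (fun i => (2:ℝ)^n * ⟪φ i, φ j⟫)]
  simp [real_inner_self_eq_norm_sq]

section core
variable (φ : Fin n → H)

local notation "c" => coef (fun ε => ‖S φ ε‖)

/-- level-one coefficients vanish by evenness -/
lemma coef_singleton (i : Fin n) : c {i} = 0 := by
  have key := sum_flipAll (fun ε => ‖S φ ε‖ * w {i} ε)
  have hneg : ∑ ε : Fin n → Bool, ‖S φ (flipAll ε)‖ * w {i} (flipAll ε)
      = - ∑ ε : Fin n → Bool, ‖S φ ε‖ * w {i} ε := by
    rw [← Finset.sum_neg_distrib]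
    apply Finset.sum_congr rfl
    intro ε _
    rw [S_flipAll, norm_neg, w, w, Finset.prod_singleton, Finset.prod_singleton]
    show ‖S φ ε‖ * sg (!(ε i)) = -(‖S φ ε‖ * sg (ε i))
    rw [sg_not]; ring
  rw [hneg] at key
  have : ∑ ε : Fin n → Bool, ‖S φ ε‖ * w {i} ε = 0 := by linarith
  simpa [coef] using this

lemma coef_sub (f g : (Fin n → Bool) → ℝ) (A : Finset (Fin n)) :
    coef (fun ε => f ε - g ε) A = coef f A - coef g A := by
  rw [coef, coef, coef, ← Finset.sum_sub_distrib]
  exact Finset.sum_congr rfl fun ε _ => by ring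

/-- spectral inequality : `∑_A |A| c_A² ≤ ∑_A c_A²` -/
lemma spectral :
    ∑ A : Finset (Fin n), (A.card : ℝ) * (c A)^2 ≤ ∑ A : Finset (Fin n), (c A)^2 := by
  set d : Fin n → (Fin n → Bool) → ℝ := fun i ε => ‖S φ ε‖ - ‖S φ (flip i ε)‖ with hd
  -- coefficient of the difference
  have hcoefd : ∀ i A, coef (d i) A = (if i ∈ A then 2 else 0) * c A := by
    intro i A
    rw [hd]
    rw [coef_sub, coef_comp_flip (fun ε => ‖S φ ε‖) i A]
    split <;> ring
  -- energy identity for each difference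
  have henergy : ∀ i, ∑ A : Finset (Fin n), (coef (d i) A)^2 = 2^n * ∑ ε, (d i ε)^2 := by
    intro i
    have := parseval (d i) (d i)
    simpa [pow_two] using this
  -- correlation identity
  have hcorr : ∀ i, ∑ ε, (d i ε)^2 = 2 * ∑ ε, ‖S φ ε‖ * d i ε := by
    intro i
    have h1 : ∑ ε, ‖S φ (flip i ε)‖^2 = ∑ ε, ‖S φ ε‖^2 :=
      sum_flip i (fun ε => ‖S φ ε‖^2)
    have h2 : ∑ ε, ‖S φ (flip i ε)‖ * ‖S φ (flip i (flip i ε))‖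
        = ∑ ε, ‖S φ ε‖ * ‖S φ (flip i ε)‖ :=
      sum_flip i (fun ε => ‖S φ ε‖ * ‖S φ (flip i ε)‖)
    have hff : ∀ ε, flip i (flip i ε) = ε := by
      intro ε; funext j
      by_cases hj : j = i
      · subst hj; simp [flip]
      · simp [flip, Function.update_of_ne hj]
    simp only [hff] at h2
    have e1 : ∑ ε, (d i ε)^2
        = ∑ ε, (‖S φ ε‖^2 + ‖S φ (flip i ε)‖^2 - 2 * (‖S φ ε‖ * ‖S φ (flip i ε)‖)) := by
      apply Finset.sum_congr rfl; intro ε _; rw [hd]; ring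
    have e2 : ∑ ε, ‖S φ ε‖ * d i ε
        = ∑ ε, (‖S φ ε‖^2 - ‖S φ ε‖ * ‖S φ (flip i ε)‖) := by
      apply Finset.sum_congr rfl; intro ε _; rw [hd]; ring
    rw [e1, e2, Finset.sum_sub_distrib, Finset.sum_add_distrib, h1,
      Finset.sum_sub_distrib, ← Finset.mul_sum]
    ring
  -- pointwise triangle bound
  have hpt : ∀ ε, ∑ i, d i ε ≤ 2 * ‖S φ ε‖ := by
    intro ε
    have := triangle_key φ ε
    have hs : ∑ i, d i ε = (n : ℝ) * ‖S φ ε‖ - ∑ i, ‖S φ (flip i ε)‖ := by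
      rw [hd]
      rw [Finset.sum_sub_distrib, Finset.sum_const, card_univ, Fintype.card_fin,
        nsmul_eq_mul]
    rw [hs]; linarith
  -- sum the correlation bound
  have hmain : ∑ i, ∑ ε, ‖S φ ε‖ * d i ε ≤ 2 * ∑ ε, ‖S φ ε‖^2 := by
    rw [Finset.sum_comm]
    calc ∑ ε, ∑ i, ‖S φ ε‖ * d i ε = ∑ ε, ‖S φ ε‖ * ∑ i, d i ε := by
          exact Finset.sum_congr rfl fun ε _ => by rw [Finset.mul_sum]
      _ ≤ ∑ ε, ‖S φ ε‖ * (2 * ‖S φ ε‖) := by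
          apply Finset.sum_le_sum
          intro ε _
          exact mul_le_mul_of_nonneg_left (hpt ε) (norm_nonneg _)
      _ = 2 * ∑ ε, ‖S φ ε‖^2 := by
          rw [Finset.mul_sum]; exact Finset.sum_congr rfl fun ε _ => by ring
  -- assemble
  have hcard : ∀ A : Finset (Fin n), ∑ i, (if i ∈ A then (2:ℝ) else 0)^2 * (c A)^2
      = 4 * (A.card : ℝ) * (c A)^2 := by
    intro A
    rw [← Finset.sum_mul]
    have : ∑ i, (if i ∈ A then (2:ℝ) else 0)^2 = ∑ i, (if i ∈ A then (4:ℝ) else 0) :=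
      Finset.sum_congr rfl fun i _ => by split <;> norm_num
    rw [this, Finset.sum_ite_mem, Finset.univ_inter, Finset.sum_const, nsmul_eq_mul]
    ring
  have key : ∑ i, ∑ A : Finset (Fin n), (coef (d i) A)^2
      ≤ 4 * ∑ A : Finset (Fin n), (c A)^2 := by
    calc ∑ i, ∑ A : Finset (Fin n), (coef (d i) A)^2
        = ∑ i, (2^n * ∑ ε, (d i ε)^2) := by
          exact Finset.sum_congr rfl fun i _ => henergy i
      _ = 2^n * ∑ i, ∑ ε, (d i ε)^2 := by rw [Finset.mul_sum]
      _ = 2^n * ∑ i, (2 * ∑ ε, ‖S φ ε‖ * d i ε) := by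
          congr 1
          exact Finset.sum_congr rfl fun i _ => hcorr i
      _ = 2^n * (2 * ∑ i, ∑ ε, ‖S φ ε‖ * d i ε) := by
          rw [← Finset.mul_sum]
      _ ≤ 2^n * (2 * (2 * ∑ ε, ‖S φ ε‖^2)) := by
          apply mul_le_mul_of_nonneg_left _ (by positivity)
          apply mul_le_mul_of_nonneg_left hmain (by norm_num)
      _ = 4 * (2^n * ∑ ε, ‖S φ ε‖ * ‖S φ ε‖) := by
          rw [show ∑ ε, ‖S φ ε‖^2 = ∑ ε, ‖S φ ε‖ * ‖S φ ε‖ from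
            Finset.sum_congr rfl fun ε _ => by ring]
          ring
      _ = 4 * ∑ A : Finset (Fin n), (c A)^2 := by
          rw [← parseval]
          congr 1
          exact Finset.sum_congr rfl fun A _ => by ring
  have lhs_eq : ∑ i, ∑ A : Finset (Fin n), (coef (d i) A)^2
      = 4 * ∑ A : Finset (Fin n), (A.card : ℝ) * (c A)^2 := by
    rw [Finset.sum_comm]
    rw [Finset.mul_sum]
    apply Finset.sum_congr rfl
    intro A _
    calc ∑ i, (coef (d i) A)^2 = ∑ i, (if i ∈ A then (2:ℝ) else 0)^2 * (c A)^2 := by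
          exact Finset.sum_congr rfl fun i _ => by rw [hcoefd]; ring
      _ = 4 * (A.card : ℝ) * (c A)^2 := hcard A
      _ = 4 * ((A.card : ℝ) * (c A)^2) := by ring
  rw [lhs_eq] at key
  linarith

lemma coef_empty : c ∅ = ∑ ε, ‖S φ ε‖ := by
  rw [coef]
  exact Finset.sum_congr rfl fun ε _ => by rw [w, Finset.prod_empty, mul_one]

/-- Khintchine–Kahane squared: `2^n ∑ h² ≤ 2 (∑ h)²` -/
lemma kk_sq : 2^n * ∑ ε : Fin n → Bool, ‖S φ ε‖^2
    ≤ 2 * (∑ ε : Fin n → Bool, ‖S φ ε‖)^2 := by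
  have hpars : ∑ A : Finset (Fin n), (c A)^2 = 2^n * ∑ ε : Fin n → Bool, ‖S φ ε‖^2 := by
    have := parseval (fun ε => ‖S φ (n := n) ε‖) (fun ε => ‖S φ ε‖)
    calc ∑ A : Finset (Fin n), (c A)^2 = ∑ A : Finset (Fin n), c A * c A :=
          Finset.sum_congr rfl fun A _ => sq (c A)
      _ = 2^n * ∑ ε : Fin n → Bool, ‖S φ ε‖ * ‖S φ ε‖ := this
      _ = 2^n * ∑ ε : Fin n → Bool, ‖S φ ε‖^2 := by
          congr 1; exact Finset.sum_congr rfl fun ε _ => (sq ‖S φ ε‖).symm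
  -- sum over nonempty A
  have hsplit : ∑ A : Finset (Fin n), (c A)^2
      = (c ∅)^2 + ∑ A ∈ (univ : Finset (Finset (Fin n))).erase ∅, (c A)^2 := by
    exact (Finset.add_sum_erase _ _ (mem_univ ∅)).symm
  have hsplit2 : ∑ A : Finset (Fin n), ((A.card : ℝ) - 1) * (c A)^2
      = -(c ∅)^2 + ∑ A ∈ (univ : Finset (Finset (Fin n))).erase ∅,
          ((A.card : ℝ) - 1) * (c A)^2 := by
    have := (Finset.add_sum_erase _ (fun A => ((A.card : ℝ) - 1) * (c A)^2)
      (mem_univ ∅)).symm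
    rw [this]
    simp
  have hmono : ∑ A ∈ (univ : Finset (Finset (Fin n))).erase ∅, (c A)^2
      ≤ ∑ A ∈ (univ : Finset (Finset (Fin n))).erase ∅, ((A.card : ℝ) - 1) * (c A)^2 := by
    apply Finset.sum_le_sum
    intro A hA
    have hAne : A ≠ ∅ := Finset.ne_of_mem_erase hA
    rcases Nat.lt_or_ge A.card 2 with hc | hc
    · have h1 : A.card = 1 := by
        have := Finset.card_pos.mpr (Finset.nonempty_of_ne_empty hAne)
        omega
      obtain ⟨i, rfl⟩ := Finset.card_eq_one.mp h1
      rw [coef_singleton]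
      norm_num
    · have : (1:ℝ) ≤ (A.card : ℝ) - 1 := by
        have : (2:ℝ) ≤ (A.card : ℝ) := by exact_mod_cast hc
        linarith
      nlinarith [sq_nonneg (c A)]
  have hspec : ∑ A : Finset (Fin n), ((A.card : ℝ) - 1) * (c A)^2 ≤ 0 := by
    have := spectral φ
    have hexp : ∑ A : Finset (Fin n), ((A.card : ℝ) - 1) * (c A)^2
        = ∑ A : Finset (Fin n), (A.card : ℝ) * (c A)^2
          - ∑ A : Finset (Fin n), (c A)^2 := by
      rw [← Finset.sum_sub_distrib]
      exact Finset.sum_congr rfl fun A _ => by ring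
    rw [hexp]
    linarith
  have : ∑ A : Finset (Fin n), (c A)^2 ≤ 2 * (c ∅)^2 := by
    rw [hsplit]
    have := hsplit2 ▸ hspec
    linarith
  rw [← hpars, ← coef_empty]
  linarith

/-- Khintchine–Kahane: `∑_ε ‖S ε‖ ≥ 2^n √(∑‖φᵢ‖²) / √2` -/
lemma kk : 2^n * (Real.sqrt (∑ i, ‖φ i‖^2) / Real.sqrt 2)
    ≤ ∑ ε : Fin n → Bool, ‖S φ ε‖ := by
  set B := Real.sqrt (∑ i, ‖φ i‖^2) with hB
  have hM : (0:ℝ) ≤ ∑ i, ‖φ i‖^2 := Finset.sum_nonneg fun i _ => sq_nonneg _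
  have hB2 : B^2 = ∑ i, ‖φ i‖^2 := Real.sq_sqrt hM
  have hBpos : 0 ≤ B := Real.sqrt_nonneg _
  have hsum_nonneg : (0:ℝ) ≤ ∑ ε : Fin n → Bool, ‖S φ ε‖ :=
    Finset.sum_nonneg fun ε _ => norm_nonneg _
  have hsq : (2^n * (B / Real.sqrt 2))^2 ≤ (∑ ε : Fin n → Bool, ‖S φ ε‖)^2 := by
    have h1 := kk_sq φ
    rw [sum_normsq φ] at h1
    have h2 : (Real.sqrt 2)^2 = 2 := Real.sq_sqrt (by norm_num)
    have hs2 : (0:ℝ) < Real.sqrt 2 := Real.sqrt_pos.mpr (by norm_num)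
    rw [mul_pow, div_pow, h2, hB2]
    have e : ((2:ℝ)^n)^2 = 2^n * 2^n := sq _
    rw [e]
    have e2 : (2:ℝ)^n * 2^n * ((∑ i, ‖φ i‖ ^ 2) / 2)
        = (2^n * (2^n * ∑ i, ‖φ i‖ ^ 2)) / 2 := by ring
    rw [e2, div_le_iff₀ (by norm_num : (0:ℝ) < 2)]
    linarith
  have hlhs_nonneg : (0:ℝ) ≤ 2^n * (B / Real.sqrt 2) := by positivity
  calc 2^n * (B / Real.sqrt 2)
      = Real.sqrt ((2^n * (B / Real.sqrt 2))^2) := (Real.sqrt_sq hlhs_nonneg).symm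
    _ ≤ Real.sqrt ((∑ ε : Fin n → Bool, ‖S φ ε‖)^2) := Real.sqrt_le_sqrt hsq
    _ = ∑ ε : Fin n → Bool, ‖S φ ε‖ := Real.sqrt_sq hsum_nonneg

end core
end Stmt15Aux

/-- Lower bound (via Khintchine–Kahane) on the empirical Rademacher complexity of a ball of
radius `r` of linear functionals on an inner product space: it is at least
`(r/(n√2)) √(Σᵢ ‖φᵢ‖²)`. -/
theorem stmt15 {H : Type*} [NormedAddCommGroup H] [InnerProductSpace ℝ H]
    (n : ℕ) (hn : 0 < n) (φ : Fin n → H) (r : ℝ) (hr : 0 < r) :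
    (1 / n : ℝ) * ((1 / 2 ^ n : ℝ) * ∑ s : Fin n → Bool,
        sSup {v : ℝ | ∃ w : H, ‖w‖ ≤ r ∧
          v = ∑ i, (if s i then (1 : ℝ) else -1) * ⟪w, φ i⟫}) ≥
      (r / (n * Real.sqrt 2)) * Real.sqrt (∑ i, ‖φ i‖ ^ 2) := by
  open Stmt15Aux Finset in
  have hform : ∀ (s : Fin n → Bool) (w : H),
      ∑ i, (if s i then (1 : ℝ) else -1) * ⟪w, φ i⟫ = ⟪w, Stmt15Aux.S φ s⟫ := by
    intro s w
    rw [Stmt15Aux.S, inner_sum]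
    apply Finset.sum_congr rfl
    intro i _
    rw [real_inner_smul_right, Stmt15Aux.sg]
  -- the sup over the ball is at least r * ‖S φ s‖
  have hsup : ∀ s : Fin n → Bool, r * ‖Stmt15Aux.S φ s‖ ≤
      sSup {v : ℝ | ∃ w : H, ‖w‖ ≤ r ∧
        v = ∑ i, (if s i then (1 : ℝ) else -1) * ⟪w, φ i⟫} := by
    intro s
    set u := Stmt15Aux.S φ s with hu
    have hbdd : BddAbove {v : ℝ | ∃ w : H, ‖w‖ ≤ r ∧
        v = ∑ i, (if s i then (1 : ℝ) else -1) * ⟪w, φ i⟫} := by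
      refine ⟨r * ‖u‖, ?_⟩
      rintro v ⟨x, hx, rfl⟩
      rw [hform s x]
      calc ⟪x, u⟫ ≤ ‖x‖ * ‖u‖ := real_inner_le_norm x u
        _ ≤ r * ‖u‖ := mul_le_mul_of_nonneg_right hx (norm_nonneg u)
    apply le_csSup hbdd
    by_cases hu0 : u = 0
    · refine ⟨0, by simp [hr.le], ?_⟩
      rw [hform s 0, hu0]
      simp
    · refine ⟨(r / ‖u‖) • u, ?_, ?_⟩
      · rw [norm_smul, Real.norm_eq_abs, abs_of_nonneg (by positivity)]
        rw [div_mul_cancel₀ _ (norm_ne_zero_iff.mpr hu0)]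
      · rw [hform s _, real_inner_smul_left, real_inner_self_eq_norm_sq]
        have hne : ‖u‖ ≠ 0 := norm_ne_zero_iff.mpr hu0
        field_simp
  -- sum it up
  have hsum : r * (2^n * (Real.sqrt (∑ i, ‖φ i‖^2) / Real.sqrt 2))
      ≤ ∑ s : Fin n → Bool, sSup {v : ℝ | ∃ w : H, ‖w‖ ≤ r ∧
          v = ∑ i, (if s i then (1 : ℝ) else -1) * ⟪w, φ i⟫} := by
    calc r * (2^n * (Real.sqrt (∑ i, ‖φ i‖^2) / Real.sqrt 2))
        ≤ r * ∑ ε : Fin n → Bool, ‖Stmt15Aux.S φ ε‖ :=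
          mul_le_mul_of_nonneg_left (Stmt15Aux.kk φ) hr.le
      _ = ∑ ε : Fin n → Bool, r * ‖Stmt15Aux.S φ ε‖ := Finset.mul_sum _ _ _
      _ ≤ _ := Finset.sum_le_sum fun s _ => hsup s
  -- arithmetic
  have hn' : (0:ℝ) < n := by exact_mod_cast hn
  have h2n : (0:ℝ) < 2^n := by positivity
  have hs2 : (0:ℝ) < Real.sqrt 2 := Real.sqrt_pos.mpr (by norm_num)
  rw [ge_iff_le, show (r / (n * Real.sqrt 2)) * Real.sqrt (∑ i, ‖φ i‖ ^ 2)
    = (1 / n : ℝ) * ((1 / 2 ^ n : ℝ) *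
        (r * (2^n * (Real.sqrt (∑ i, ‖φ i‖^2) / Real.sqrt 2)))) from by
      field_simp]
  apply mul_le_mul_of_nonneg_left _ (by positivity)
  apply mul_le_mul_of_nonneg_left hsum (by positivity)
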